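/- Any two overlapping bands of a grid polyhedron overlap in at least two grid squares. -/

import Mathlib

open scoped Classical

namespace StripFold

/-- A cell of the unit-cube grid (also used for integer grid points and vectors). -/
abbrev Cell : Type := Fin 3 → ℤ

/-- A grid square `(c, i)`: the common face of the unit cubes at cells `c` and `c + eᵢ`. -/
abbrev Sq : Type := Cell × Fin 3

/-- A grid edge `(p, d)`: the unit segment of the cube grid from `p` to `p + e_d`. -/
abbrev GridEdge : Type := Cell × Fin 3

/-- The standard unit vector `eᵢ`. -/
def unitVec (i : Fin 3) : Cell := fun j => if j = i then 1 else 0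

/-- The four grid edges lying on (the boundary of) a grid square. -/
def edgesOf (s : Sq) : Set GridEdge :=
  { e | ∃ j k : Fin 3, j ≠ s.2 ∧ k ≠ s.2 ∧ j ≠ k ∧ e.2 = j ∧
      e.1 s.2 = s.1 s.2 + 1 ∧ e.1 j = s.1 j ∧ (e.1 k = s.1 k ∨ e.1 k = s.1 k + 1) }

/-- The four grid vertices (corners) of a grid square. -/
def vertsOf (s : Sq) : Set Cell :=
  { q | q s.2 = s.1 s.2 + 1 ∧ ∀ j, j ≠ s.2 → (q j = s.1 j ∨ q j = s.1 j + 1) }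

/-- Two grid squares are edge-adjacent: they are distinct and share a grid edge. -/
def edgeAdj (s t : Sq) : Prop := s ≠ t ∧ (edgesOf s ∩ edgesOf t).Nonempty

lemma edgeAdj_symm {s t : Sq} (h : edgeAdj s t) : edgeAdj t s :=
  ⟨h.1.symm, by rw [Set.inter_comm]; exact h.2⟩

/-- The dual graph of a set of grid squares: vertices are the squares, edges join
edge-adjacent squares. -/
def dualGraph (S : Set Sq) : SimpleGraph S where
  Adj a b := edgeAdj a.1 b.1
  symm := ⟨fun _ _ h => edgeAdj_symm h⟩
  loopless := ⟨fun _ h => h.1 rfl⟩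

/-- A grid surface: a finite nonempty set of grid squares whose dual graph is connected. -/
structure IsGridSurface (S : Set Sq) : Prop where
  finite : S.Finite
  nonempty : S.Nonempty
  connected : (dualGraph S).Connected

/-- A milling tour of a grid surface: a closed walk in the dual graph visiting every
vertex at least once.  Its length is `w.length`. -/
def IsMillingTour {S : Set Sq} {v : S} (w : (dualGraph S).Walk v v) : Prop :=
  ∀ u : S, u ∈ w.support

/-- The boundary of a set `C` of unit cubes: the grid squares incident to exactly one
cube of `C`. -/
def boundary (C : Set Cell) : Set Sq :=
  { s | Xor' (s.1 ∈ C) (s.1 + unitVec s.2 ∈ C) }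

/-- All grid edges lying on squares of `P`. -/
def edgesOfSet (P : Set Sq) : Set GridEdge := ⋃ s ∈ P, edgesOf s

/-- All grid vertices lying on squares of `P`. -/
def vertsOfSet (P : Set Sq) : Set Cell := ⋃ s ∈ P, vertsOf s

/-- A grid polyhedron: `P` is the boundary of a finite nonempty set `C` of unit cubes,
`P` is a grid surface, every grid edge lying on a square of `P` lies on exactly two
squares of `P`, and `V - E + F = 2` (stated as `V + F = E + 2`). -/
structure IsGridPolyhedron (C : Set Cell) (P : Set Sq) : Prop where
  finC : C.Finite
  neC : C.Nonempty
  bdry : P = boundary C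
  surface : IsGridSurface P
  edgeTwo : ∀ e : GridEdge, (∃ s ∈ P, e ∈ edgesOf s) →
    { s | s ∈ P ∧ e ∈ edgesOf s }.ncard = 2
  euler : (vertsOfSet P).ncard + P.ncard = (edgesOfSet P).ncard + 2

/-- The squares of `P` that lie in the slab `x_a ∈ [x, x + 1]` and whose normal is
perpendicular to axis `a`. -/
def slabSquares (P : Set Sq) (a : Fin 3) (x : ℤ) : Set Sq :=
  { s | s ∈ P ∧ s.2 ≠ a ∧ s.1 a = x }

/-- `B` is a connected component, under edge-adjacency, of the set `T` of grid squares. -/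
def IsCompOf (B T : Set Sq) : Prop :=
  B.Nonempty ∧ B ⊆ T ∧ (dualGraph B).Connected ∧
    ∀ s ∈ B, ∀ t ∈ T, edgeAdj s t → t ∈ B

/-- A band of a grid polyhedron `P`: an `x`-, `y`-, or `z`-band, i.e. a connected
component under edge-adjacency of the squares of `P` lying in a single slab with
normal perpendicular to the slab axis. -/
def IsBand (P : Set Sq) (B : Set Sq) : Prop :=
  ∃ (a : Fin 3) (x : ℤ), IsCompOf B (slabSquares P a x)

/-- Two bands overlap: they are distinct and some grid square belongs to both. -/
def Overlaps (B B' : Set Sq) : Prop := B ≠ B' ∧ (B ∩ B').Nonempty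

/-- Two bands are adjacent: they do not overlap and some grid square of one is
edge-adjacent to some grid square of the other. -/
def BandAdjacent (B B' : Set Sq) : Prop :=
  ¬ Overlaps B B' ∧ ∃ g ∈ B, ∃ g' ∈ B', edgeAdj g g'

/-- A band cover of `P`: a set of bands of `P` covering every grid square of `P`. -/
def IsBandCover (P : Set Sq) (S : Set (Set Sq)) : Prop :=
  (∀ B ∈ S, IsBand P B) ∧ ∀ g ∈ P, ∃ B ∈ S, g ∈ B

/-- The band graph `G_P`: one vertex per band of `P`, an edge between two bands iff
they overlap. -/
def bandGraph (P : Set Sq) : SimpleGraph {B : Set Sq // IsBand P B} where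
  Adj B B' := Overlaps B.1 B'.1
  symm := ⟨fun _ _ h => ⟨h.1.symm, by rw [Set.inter_comm]; exact h.2⟩⟩
  loopless := ⟨fun _ h => h.1 rfl⟩

section Walks

variable {S : Set Sq} {v : S}

/-- The index of the previous position of a closed walk, cyclically. -/
def prevIdx (w : (dualGraph S).Walk v v) (k : ℕ) : ℕ := (k + w.length - 1) % w.length

/-- The index of the next position of a closed walk, cyclically. -/
def nextIdx (w : (dualGraph S).Walk v v) (k : ℕ) : ℕ := (k + 1) % w.length

/-- The grid square visited at position `k` of the walk. -/
def squareAt (w : (dualGraph S).Walk v v) (k : ℕ) : Sq := (w.getVert k).1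

/-- `e` is a side shared by grid squares `s` and `t`. -/
def sharedSide (s t : Sq) (e : GridEdge) : Prop := e ∈ edgesOf s ∧ e ∈ edgesOf t

/-- `e` is the side through which the visit at position `k` enters its grid square. -/
def EnterSide (w : (dualGraph S).Walk v v) (k : ℕ) (e : GridEdge) : Prop :=
  sharedSide (squareAt w (prevIdx w k)) (squareAt w k) e

/-- `e` is the side through which the visit at position `k` exits its grid square. -/
def ExitSide (w : (dualGraph S).Walk v v) (k : ℕ) (e : GridEdge) : Prop :=
  sharedSide (squareAt w k) (squareAt w (nextIdx w k)) e

/-- The visit at position `k` is straight: it enters and exits through opposite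
(distinct parallel) sides. -/
def StraightVisit (w : (dualGraph S).Walk v v) (k : ℕ) : Prop :=
  ∃ e₁ e₂, EnterSide w k e₁ ∧ ExitSide w k e₂ ∧ e₁ ≠ e₂ ∧ e₁.2 = e₂.2

/-- The visit at position `k` is a turn: it enters and exits through incident
(non-parallel) sides. -/
def TurnVisit (w : (dualGraph S).Walk v v) (k : ℕ) : Prop :=
  ∃ e₁ e₂, EnterSide w k e₁ ∧ ExitSide w k e₂ ∧ e₁.2 ≠ e₂.2

/-- The visit at position `k` is a U-turn: it enters and exits through the same side. -/
def UTurnVisit (w : (dualGraph S).Walk v v) (k : ℕ) : Prop :=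
  ∃ e, EnterSide w k e ∧ ExitSide w k e

/-- The number of turns of a closed walk: the number of visits that are turns or
U-turns. -/
noncomputable def turnCount (w : (dualGraph S).Walk v v) : ℕ :=
  {k | k < w.length ∧ (TurnVisit w k ∨ UTurnVisit w k)}.ncard

/-- The set of positions at which the walk visits the grid square `g`. -/
def visitsOf (w : (dualGraph S).Walk v v) (g : Sq) : Set ℕ :=
  {k | k < w.length ∧ squareAt w k = g}

/-- `g` is visited exactly at the two distinct positions `k₁` and `k₂`. -/
def JunctionAt (w : (dualGraph S).Walk v v) (g : Sq) (k₁ k₂ : ℕ) : Prop :=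
  k₁ ≠ k₂ ∧ visitsOf w g = {k₁, k₂}

/-- The four sides used by the two visits at positions `k₁, k₂` are `e₁, e₂, e₃, e₄`,
pairwise distinct (hence each of the four sides of the square is used exactly once). -/
def FourSides (w : (dualGraph S).Walk v v) (k₁ k₂ : ℕ) (e₁ e₂ e₃ e₄ : GridEdge) : Prop :=
  EnterSide w k₁ e₁ ∧ ExitSide w k₁ e₂ ∧ EnterSide w k₂ e₃ ∧ ExitSide w k₂ e₄ ∧
    e₁ ≠ e₂ ∧ e₁ ≠ e₃ ∧ e₁ ≠ e₄ ∧ e₂ ≠ e₃ ∧ e₂ ≠ e₄ ∧ e₃ ≠ e₄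

/-- `g` is a straight junction: visited exactly twice, each of its four sides used
exactly once, and both visits are straight. -/
def IsStraightJunction (w : (dualGraph S).Walk v v) (g : Sq) : Prop :=
  ∃ k₁ k₂, JunctionAt w g k₁ k₂ ∧ ∃ e₁ e₂ e₃ e₄, FourSides w k₁ k₂ e₁ e₂ e₃ e₄ ∧
    e₁.2 = e₂.2 ∧ e₃.2 = e₄.2

/-- `g` is a turn junction: visited exactly twice, each of its four sides used
exactly once, and both visits are turns. -/
def IsTurnJunction (w : (dualGraph S).Walk v v) (g : Sq) : Prop :=
  ∃ k₁ k₂, JunctionAt w g k₁ k₂ ∧ ∃ e₁ e₂ e₃ e₄, FourSides w k₁ k₂ e₁ e₂ e₃ e₄ ∧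
    e₁.2 ≠ e₂.2 ∧ e₃.2 ≠ e₄.2

end Walks

/-- The third coordinate axis, distinct from distinct axes `i` and `d`. -/
def thirdIdx (i d : Fin 3) : Fin 3 := ⟨(3 - (i.val + d.val)) % 3, Nat.mod_lt _ (by norm_num)⟩

/-- Cross product of integer vectors in 3-space. -/
def cross3 (u v : Cell) : Cell := fun i => u (i + 1) * v (i + 2) - u (i + 2) * v (i + 1)

/-- Dot product of integer vectors in 3-space. -/
def dot3 (u v : Cell) : ℤ := ∑ i : Fin 3, u i * v i

/-- The outward unit normal of the grid square `s` on the boundary of the cube set `C`: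
it points out of `C`. -/
noncomputable def outwardNormal (C : Set Cell) (s : Sq) : Cell :=
  if s.1 ∈ C then unitVec s.2 else -unitVec s.2

/-- The unit direction of travel when entering the grid square `g` through its side `e`:
in-plane, perpendicular to `e`, pointing from `e` into `g`. -/
def enterDir (g : Sq) (e : GridEdge) : Cell :=
  if e.1 (thirdIdx g.2 e.2) = g.1 (thirdIdx g.2 e.2) then unitVec (thirdIdx g.2 e.2)
  else -unitVec (thirdIdx g.2 e.2)

/-- The unit direction of travel when exiting the grid square `g` through its side `e`. -/
def exitDir (g : Sq) (e : GridEdge) : Cell := -enterDir g e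

section Turns

variable {S : Set Sq} {v : S}

/-- The visit at position `k` is a left turn: it enters with direction `u` and exits
with direction `v` through incident sides, with `(u × v) · n > 0` for the outward
normal `n`. -/
def IsLeftTurnVisit (C : Set Cell) (w : (dualGraph S).Walk v v) (k : ℕ) : Prop :=
  ∃ e₁ e₂, EnterSide w k e₁ ∧ ExitSide w k e₂ ∧ e₁.2 ≠ e₂.2 ∧
    0 < dot3 (cross3 (enterDir (squareAt w k) e₁) (exitDir (squareAt w k) e₂))
        (outwardNormal C (squareAt w k))

/-- The visit at position `k` is a right turn: `(u × v) · n < 0`. -/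
def IsRightTurnVisit (C : Set Cell) (w : (dualGraph S).Walk v v) (k : ℕ) : Prop :=
  ∃ e₁ e₂, EnterSide w k e₁ ∧ ExitSide w k e₂ ∧ e₁.2 ≠ e₂.2 ∧
    dot3 (cross3 (enterDir (squareAt w k) e₁) (exitDir (squareAt w k) e₂))
        (outwardNormal C (squareAt w k)) < 0

end Turns

/-- `k₁` and `k₂` are cyclically consecutive elements of the set `T` of positions:
no element of `T` lies strictly between them in cyclic order. -/
def CyclicallyConsecutive (T : Set ℕ) (k₁ k₂ : ℕ) : Prop :=
  k₁ ∈ T ∧ k₂ ∈ T ∧ k₁ ≠ k₂ ∧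
    ∀ j ∈ T, j ≠ k₁ → j ≠ k₂ →
      ¬ ((k₁ < j ∧ j < k₂) ∨ (k₂ < k₁ ∧ (k₁ < j ∨ j < k₂)))



/-! ### Layer 1: basic geometry of squares, edges, vertices -/

lemma thirdIdx_spec : ∀ i d : Fin 3, d ≠ i → thirdIdx i d ≠ i ∧ thirdIdx i d ≠ d := by decide

lemma eq_thirdIdx : ∀ i d k : Fin 3, d ≠ i → k ≠ i → k ≠ d → k = thirdIdx i d := by decide

lemma fin3_trichotomy : ∀ i d m : Fin 3, d ≠ i → m = i ∨ m = d ∨ m = thirdIdx i d := by decide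

/-- Membership in `edgesOf` in canonical form. -/
lemma mem_edgesOf {s : Sq} {e : GridEdge} :
    e ∈ edgesOf s ↔ e.2 ≠ s.2 ∧ e.1 s.2 = s.1 s.2 + 1 ∧ e.1 e.2 = s.1 e.2 ∧
      (e.1 (thirdIdx s.2 e.2) = s.1 (thirdIdx s.2 e.2) ∨
        e.1 (thirdIdx s.2 e.2) = s.1 (thirdIdx s.2 e.2) + 1) := by
  constructor
  · rintro ⟨j, k, hj, hk, hjk, hej, h1, h2, h3⟩
    have hk3 : k = thirdIdx s.2 j := eq_thirdIdx s.2 j k hj hk (Ne.symm hjk)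
    subst hej; rw [← hk3]; exact ⟨hj, h1, h2, h3⟩
  · rintro ⟨h0, h1, h2, h3⟩
    exact ⟨e.2, thirdIdx s.2 e.2, h0, (thirdIdx_spec s.2 e.2 h0).1,
      fun h => (thirdIdx_spec s.2 e.2 h0).2 h.symm, rfl, h1, h2, h3⟩

/-- The edge of square `s` in direction `d` (`d` not the normal), on the far side
in the remaining direction iff `δ`. -/
def eSide (s : Sq) (d : Fin 3) (δ : Bool) : GridEdge :=
  (s.1 + unitVec s.2 + (if δ then unitVec (thirdIdx s.2 d) else 0), d)

lemma unitVec_apply (i j : Fin 3) : unitVec i j = if j = i then 1 else 0 := rfl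

lemma unitVec_self (i : Fin 3) : unitVec i i = 1 := by simp [unitVec]

lemma unitVec_ne {i j : Fin 3} (h : j ≠ i) : unitVec i j = 0 := by simp [unitVec, h]

lemma eSide_mem {s : Sq} {d : Fin 3} (hd : d ≠ s.2) (δ : Bool) : eSide s d δ ∈ edgesOf s := by
  obtain ⟨ht1, ht2⟩ := thirdIdx_spec s.2 d hd
  rw [mem_edgesOf]
  refine ⟨hd, ?_, ?_, ?_⟩
  · simp [eSide, unitVec_self, unitVec_ne (Ne.symm ht1)]
    cases δ <;> simp [unitVec_ne (Ne.symm ht1)]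
  · simp [eSide, unitVec_ne hd]
    cases δ <;> simp [unitVec_ne (fun h => ht2 h.symm)]
  · cases δ <;> simp [eSide, unitVec_self, unitVec_ne ht1]

lemma eSide_dir (s : Sq) (d : Fin 3) (δ : Bool) : (eSide s d δ).2 = d := rfl

/-- Any edge of `s` in direction `d` is one of the two side edges. -/
lemma edge_eq_eSide {s : Sq} {e : GridEdge} (he : e ∈ edgesOf s) :
    e = eSide s e.2 false ∨ e = eSide s e.2 true := by
  rw [mem_edgesOf] at he
  obtain ⟨h0, h1, h2, h3⟩ := he
  obtain ⟨ht1, ht2⟩ := thirdIdx_spec s.2 e.2 h0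
  have key : ∀ (δ : Bool), e.1 (thirdIdx s.2 e.2) = s.1 (thirdIdx s.2 e.2) + (if δ then 1 else 0) →
      e = eSide s e.2 δ := by
    intro δ hδ
    have : e.1 = s.1 + unitVec s.2 + (if δ then unitVec (thirdIdx s.2 e.2) else 0) := by
      funext m
      rcases fin3_trichotomy s.2 e.2 m h0 with hm | hm | hm <;> subst hm
      · simp only [Pi.add_apply, unitVec_self]
        cases δ <;> simp_all [unitVec_ne (Ne.symm ht1)]
      · simp only [Pi.add_apply, unitVec_ne h0]
        cases δ <;> simp_all [unitVec_ne (fun h => ht2 h.symm)]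
      · simp only [Pi.add_apply, unitVec_ne ht1]
        cases δ <;> simp_all [unitVec_self]
    exact Prod.ext this rfl
  rcases h3 with h3 | h3
  · exact Or.inl (key false (by simpa using h3))
  · exact Or.inr (key true (by simpa using h3))

lemma edgesOf_normal_ne {s : Sq} {e : GridEdge} (he : e ∈ edgesOf s) : e.2 ≠ s.2 :=
  (mem_edgesOf.mp he).1

lemma edgesOf_base_dir {s : Sq} {e : GridEdge} (he : e ∈ edgesOf s) : e.1 e.2 = s.1 e.2 :=
  (mem_edgesOf.mp he).2.2.1
/-! ### Layer 2: corners of a square, endpoints of edges -/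

def oth1 (i : Fin 3) : Fin 3 := if i = 0 then 1 else 0
def oth2 (i : Fin 3) : Fin 3 := if i = 2 then 1 else 2

lemma oth_spec : ∀ i : Fin 3, oth1 i ≠ i ∧ oth2 i ≠ i ∧ oth1 i ≠ oth2 i ∧
    thirdIdx i (oth1 i) = oth2 i ∧ thirdIdx i (oth2 i) = oth1 i := by decide

lemma fin3_cover : ∀ i m : Fin 3, m = i ∨ m = oth1 i ∨ m = oth2 i := by decide

/-- The corner of square `s` with offsets `δ₁` (in direction `oth1 s.2`) and `δ₂`. -/
def corner (s : Sq) (δ₁ δ₂ : Bool) : Cell :=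
  s.1 + unitVec s.2 + (if δ₁ then unitVec (oth1 s.2) else 0) +
    (if δ₂ then unitVec (oth2 s.2) else 0)

lemma corner_apply_normal (s : Sq) (δ₁ δ₂ : Bool) : corner s δ₁ δ₂ s.2 = s.1 s.2 + 1 := by
  obtain ⟨h1, h2, _, _, _⟩ := oth_spec s.2
  simp only [corner, Pi.add_apply, unitVec_self]
  cases δ₁ <;> cases δ₂ <;> simp [unitVec_ne (Ne.symm h1), unitVec_ne (Ne.symm h2)] <;> ring

lemma corner_apply_oth1 (s : Sq) (δ₁ δ₂ : Bool) :
    corner s δ₁ δ₂ (oth1 s.2) = s.1 (oth1 s.2) + (if δ₁ then 1 else 0) := by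
  obtain ⟨h1, h2, h3, _, _⟩ := oth_spec s.2
  simp only [corner, Pi.add_apply, unitVec_ne h1]
  cases δ₁ <;> cases δ₂ <;> simp [unitVec_self, unitVec_ne h3] <;> ring

lemma corner_apply_oth2 (s : Sq) (δ₁ δ₂ : Bool) :
    corner s δ₁ δ₂ (oth2 s.2) = s.1 (oth2 s.2) + (if δ₂ then 1 else 0) := by
  obtain ⟨h1, h2, h3, _, _⟩ := oth_spec s.2
  simp only [corner, Pi.add_apply, unitVec_ne h2]
  cases δ₁ <;> cases δ₂ <;> simp [unitVec_self, unitVec_ne (Ne.symm h3)] <;> ring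

lemma mem_vertsOf {s : Sq} {q : Cell} :
    q ∈ vertsOf s ↔ ∃ δ₁ δ₂ : Bool, q = corner s δ₁ δ₂ := by
  constructor
  · rintro ⟨h1, h2⟩
    obtain ⟨ho1, ho2, ho3, _, _⟩ := oth_spec s.2
    refine ⟨decide (q (oth1 s.2) = s.1 (oth1 s.2) + 1),
      decide (q (oth2 s.2) = s.1 (oth2 s.2) + 1), ?_⟩
    funext m
    rcases fin3_cover s.2 m with hm | hm | hm <;> subst hm
    · rw [corner_apply_normal]; exact h1
    · rw [corner_apply_oth1]
      rcases h2 _ ho1 with h | h <;> simp [h]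
    · rw [corner_apply_oth2]
      rcases h2 _ ho2 with h | h <;> simp [h]
  · rintro ⟨δ₁, δ₂, rfl⟩
    refine ⟨corner_apply_normal s δ₁ δ₂, fun j hj => ?_⟩
    rcases fin3_cover s.2 j with hm | hm | hm
    · exact absurd hm hj
    · subst hm; rw [corner_apply_oth1]; cases δ₁ <;> simp
    · subst hm; rw [corner_apply_oth2]; cases δ₂ <;> simp

/-- The two endpoints of a grid edge. -/
def ends (e : GridEdge) : Set Cell := {e.1, e.1 + unitVec e.2}

lemma ends_ne (e : GridEdge) : e.1 ≠ e.1 + unitVec e.2 := by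
  intro h
  have := congrFun h e.2
  simp [unitVec_self] at this

/-- Endpoints of side edges are corners. -/
lemma ends_eSide_oth1 (s : Sq) (δ : Bool) :
    (eSide s (oth1 s.2) δ).1 = corner s false δ ∧
      (eSide s (oth1 s.2) δ).1 + unitVec (oth1 s.2) = corner s true δ := by
  obtain ⟨h1, h2, h3, h4, h5⟩ := oth_spec s.2
  constructor
  · show s.1 + unitVec s.2 + (if δ then unitVec (thirdIdx s.2 (oth1 s.2)) else 0) = _
    rw [h4]; cases δ <;> simp [corner] <;> abel
  · show s.1 + unitVec s.2 + (if δ then unitVec (thirdIdx s.2 (oth1 s.2)) else 0) + _ = _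
    rw [h4]; cases δ <;> simp [corner] <;> abel

lemma ends_eSide_oth2 (s : Sq) (δ : Bool) :
    (eSide s (oth2 s.2) δ).1 = corner s δ false ∧
      (eSide s (oth2 s.2) δ).1 + unitVec (oth2 s.2) = corner s δ true := by
  obtain ⟨h1, h2, h3, h4, h5⟩ := oth_spec s.2
  constructor
  · show s.1 + unitVec s.2 + (if δ then unitVec (thirdIdx s.2 (oth2 s.2)) else 0) = _
    rw [h5]; cases δ <;> simp [corner] <;> abel
  · show s.1 + unitVec s.2 + (if δ then unitVec (thirdIdx s.2 (oth2 s.2)) else 0) + _ = _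
    rw [h5]; cases δ <;> simp [corner] <;> abel

/-- `edgesOf` as an explicit four-element set. -/
lemma edgesOf_eq (s : Sq) : edgesOf s =
    {eSide s (oth1 s.2) false, eSide s (oth1 s.2) true,
     eSide s (oth2 s.2) false, eSide s (oth2 s.2) true} := by
  obtain ⟨h1, h2, h3, _, _⟩ := oth_spec s.2
  ext e
  constructor
  · intro he
    have hd := edgesOf_normal_ne he
    simp only [Set.mem_insert_iff, Set.mem_singleton_iff]
    rcases edge_eq_eSide he with h | h <;>
        rcases fin3_cover s.2 e.2 with hm | hm | hm
    · exact absurd hm hd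
    · rw [hm] at h; tauto
    · rw [hm] at h; tauto
    · exact absurd hm hd
    · rw [hm] at h; tauto
    · rw [hm] at h; tauto
  · intro he
    simp only [Set.mem_insert_iff, Set.mem_singleton_iff] at he
    rcases he with rfl | rfl | rfl | rfl
    exacts [eSide_mem h1 _, eSide_mem h1 _, eSide_mem h2 _, eSide_mem h2 _]

lemma edgesOf_finite (s : Sq) : (edgesOf s).Finite := by
  rw [edgesOf_eq]; exact (Set.finite_singleton _).insert _ |>.insert _ |>.insert _

lemma vertsOf_finite (s : Sq) : (vertsOf s).Finite := by
  have : vertsOf s ⊆ {corner s false false, corner s true false, corner s false true,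
      corner s true true} := by
    intro q hq
    obtain ⟨δ₁, δ₂, rfl⟩ := mem_vertsOf.mp hq
    cases δ₁ <;> cases δ₂ <;> simp [Set.mem_insert_iff]
  exact Set.Finite.subset ((Set.finite_singleton _).insert _ |>.insert _ |>.insert _) this

lemma ends_mem_verts {s : Sq} {e : GridEdge} (he : e ∈ edgesOf s) :
    e.1 ∈ vertsOf s ∧ e.1 + unitVec e.2 ∈ vertsOf s := by
  rw [edgesOf_eq] at he
  simp only [Set.mem_insert_iff, Set.mem_singleton_iff] at he
  rcases he with rfl | rfl | rfl | rfl
  · exact ⟨mem_vertsOf.mpr ⟨_, _, (ends_eSide_oth1 s false).1⟩,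
      mem_vertsOf.mpr ⟨_, _, (ends_eSide_oth1 s false).2⟩⟩
  · exact ⟨mem_vertsOf.mpr ⟨_, _, (ends_eSide_oth1 s true).1⟩,
      mem_vertsOf.mpr ⟨_, _, (ends_eSide_oth1 s true).2⟩⟩
  · exact ⟨mem_vertsOf.mpr ⟨_, _, (ends_eSide_oth2 s false).1⟩,
      mem_vertsOf.mpr ⟨_, _, (ends_eSide_oth2 s false).2⟩⟩
  · exact ⟨mem_vertsOf.mpr ⟨_, _, (ends_eSide_oth2 s true).1⟩,
      mem_vertsOf.mpr ⟨_, _, (ends_eSide_oth2 s true).2⟩⟩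
/-! ### Layer 3: edges through a vertex; components; faces of an edge -/

lemma corner_inj {s : Sq} {δ₁ δ₂ ε₁ ε₂ : Bool} (h : corner s δ₁ δ₂ = corner s ε₁ ε₂) :
    δ₁ = ε₁ ∧ δ₂ = ε₂ := by
  have h1 := congrFun h (oth1 s.2)
  have h2 := congrFun h (oth2 s.2)
  rw [corner_apply_oth1, corner_apply_oth1] at h1
  rw [corner_apply_oth2, corner_apply_oth2] at h2
  constructor
  · cases δ₁ <;> cases ε₁ <;> simp_all <;> omega
  · cases δ₂ <;> cases ε₂ <;> simp_all <;> omega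

lemma mem_ends_eSide1 {s : Sq} {δ₁ δ₂ δ : Bool} :
    corner s δ₁ δ₂ ∈ ends (eSide s (oth1 s.2) δ) ↔ δ = δ₂ := by
  obtain ⟨he1, he2⟩ := ends_eSide_oth1 s δ
  constructor
  · rintro (h | h)
    · rw [he1] at h; exact ((corner_inj h).2).symm
    · rw [show (eSide s (oth1 s.2) δ).2 = oth1 s.2 from rfl, he2] at h
      exact ((corner_inj h).2).symm
  · rintro rfl
    cases δ₁
    · exact Or.inl he1.symm
    · exact Or.inr (by rw [show (eSide s (oth1 s.2) δ).2 = oth1 s.2 from rfl, he2]; exact rfl)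

lemma mem_ends_eSide2 {s : Sq} {δ₁ δ₂ δ : Bool} :
    corner s δ₁ δ₂ ∈ ends (eSide s (oth2 s.2) δ) ↔ δ = δ₁ := by
  obtain ⟨he1, he2⟩ := ends_eSide_oth2 s δ
  constructor
  · rintro (h | h)
    · rw [he1] at h; exact ((corner_inj h).1).symm
    · rw [show (eSide s (oth2 s.2) δ).2 = oth2 s.2 from rfl, he2] at h
      exact ((corner_inj h).1).symm
  · rintro rfl
    cases δ₂
    · exact Or.inl he1.symm
    · exact Or.inr (by rw [show (eSide s (oth2 s.2) δ).2 = oth2 s.2 from rfl, he2]; exact rfl)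

lemma eSide_ne_dir {s : Sq} {d d' : Fin 3} {δ δ' : Bool} (h : d ≠ d') :
    eSide s d δ ≠ eSide s d' δ' := fun hh => h (congrArg Prod.snd hh)

/-- The set of edges of `s` through a corner of `s` is an explicit pair. -/
lemma edges_through_corner (s : Sq) (δ₁ δ₂ : Bool) :
    {e | e ∈ edgesOf s ∧ corner s δ₁ δ₂ ∈ ends e} =
      {eSide s (oth1 s.2) δ₂, eSide s (oth2 s.2) δ₁} := by
  obtain ⟨h1, h2, h3, _, _⟩ := oth_spec s.2
  ext e
  simp only [Set.mem_setOf_eq, Set.mem_insert_iff, Set.mem_singleton_iff]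
  constructor
  · rintro ⟨he, hv⟩
    rw [edgesOf_eq] at he
    simp only [Set.mem_insert_iff, Set.mem_singleton_iff] at he
    rcases he with rfl | rfl | rfl | rfl
    · rw [mem_ends_eSide1.mp hv]; tauto
    · rw [mem_ends_eSide1.mp hv]; tauto
    · rw [mem_ends_eSide2.mp hv]; tauto
    · rw [mem_ends_eSide2.mp hv]; tauto
  · rintro (rfl | rfl)
    · exact ⟨eSide_mem h1 _, mem_ends_eSide1.mpr rfl⟩
    · exact ⟨eSide_mem h2 _, mem_ends_eSide2.mpr rfl⟩

lemma edges_through_nonvert {s : Sq} {v : Cell} (hv : v ∉ vertsOf s) :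
    {e | e ∈ edgesOf s ∧ v ∈ ends e} = ∅ := by
  ext e
  simp only [Set.mem_setOf_eq, Set.mem_empty_iff_false, iff_false, not_and]
  intro he hv'
  rcases hv' with h | h
  · exact hv (h ▸ (ends_mem_verts he).1)
  · exact hv (h ▸ (ends_mem_verts he).2)

/-- Walking inside a subgraph stays in an adjacency-closed set. -/
lemma walk_closure {S B T : Set Sq} (hST : S ⊆ T)
    (hcl : ∀ s ∈ B, ∀ t ∈ T, edgeAdj s t → t ∈ B) {u w : S}
    (p : (dualGraph S).Walk u w) (hu : u.1 ∈ B) : w.1 ∈ B := by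
  induction p with
  | nil => exact hu
  | @cons _ v' _ h q ih => exact ih (hcl _ hu _ (hST v'.2) h)

lemma comp_unique {B B' T : Set Sq} (h : IsCompOf B T) (h' : IsCompOf B' T) {s : Sq}
    (hs : s ∈ B) (hs' : s ∈ B') : B = B' := by
  obtain ⟨hne, hBT, hconn, hcl⟩ := h
  obtain ⟨hne', hBT', hconn', hcl'⟩ := h'
  apply Set.eq_of_subset_of_subset
  · intro t ht
    obtain ⟨p⟩ := hconn.preconnected ⟨s, hs⟩ ⟨t, ht⟩
    exact walk_closure hBT hcl' p hs'
  · intro t ht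
    obtain ⟨p⟩ := hconn'.preconnected ⟨s, hs'⟩ ⟨t, ht⟩
    exact walk_closure hBT' hcl p hs
/-! ### Layer 4: GF(2) homology of the surface -/

lemma zmod2_cases : ∀ a : ZMod 2, a = 0 ∨ a = 1 := by decide

lemma zmod2_add_eq_zero : ∀ a b : ZMod 2, a + b = 0 → a = b := by decide

lemma edgesOfSet_finite {P : Set Sq} (h : P.Finite) : (edgesOfSet P).Finite :=
  Set.Finite.biUnion h (fun s _ => edgesOf_finite s)

lemma vertsOfSet_finite {P : Set Sq} (h : P.Finite) : (vertsOfSet P).Finite :=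
  Set.Finite.biUnion h (fun s _ => vertsOf_finite s)

lemma mem_edgesOfSet {P : Set Sq} {e : GridEdge} :
    e ∈ edgesOfSet P ↔ ∃ s ∈ P, e ∈ edgesOf s := by
  simp [edgesOfSet]

lemma mem_vertsOfSet {P : Set Sq} {v : Cell} :
    v ∈ vertsOfSet P ↔ ∃ s ∈ P, v ∈ vertsOf s := by
  simp [vertsOfSet]

/-- Sum of a `{0,1}`-indicator over a finite subtype computes an `ncard`. -/
lemma sum_ind {α : Type} (T : Set α) [Fintype ↥T] (W : Set α)
    [DecidablePred fun x : ↥T => x.1 ∈ W] (hWT : W ⊆ T) :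
    ∑ x : ↥T, (if x.1 ∈ W then (1 : ZMod 2) else 0) = (W.ncard : ZMod 2) := by
  rw [Finset.sum_boole]
  congr 1
  rw [← Nat.card_coe_set_eq,
    Nat.card_congr (show ↥W ≃ {x : ↥T // x.1 ∈ W} from
      ⟨fun w => ⟨⟨w.1, hWT w.2⟩, w.2⟩, fun x => ⟨x.1.1, x.2⟩,
        fun w => rfl, fun x => rfl⟩),
    Nat.card_eq_fintype_card, Fintype.card_subtype]

/-- From `edgeTwo`: the two faces of an edge of `P`. -/
lemma faces_pair {P : Set Sq}
    (edgeTwo : ∀ e : GridEdge, (∃ s ∈ P, e ∈ edgesOf s) →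
      {s | s ∈ P ∧ e ∈ edgesOf s}.ncard = 2)
    {s : Sq} {e : GridEdge} (hs : s ∈ P) (he : e ∈ edgesOf s) :
    ∃ t, t ≠ s ∧ t ∈ P ∧ e ∈ edgesOf t ∧ {u | u ∈ P ∧ e ∈ edgesOf u} = {s, t} := by
  have h2 := edgeTwo e ⟨s, hs, he⟩
  obtain ⟨a, b, hab, hset⟩ := Set.ncard_eq_two.mp h2
  have hsmem : s ∈ ({a, b} : Set Sq) := hset ▸ ⟨hs, he⟩
  rcases hsmem with rfl | rfl
  · refine ⟨b, fun h => hab h.symm, ?_, ?_, hset⟩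
    · have : b ∈ {u | u ∈ P ∧ e ∈ edgesOf u} := hset ▸ Or.inr rfl
      exact this.1
    · have : b ∈ {u | u ∈ P ∧ e ∈ edgesOf u} := hset ▸ Or.inr rfl
      exact this.2
  · refine ⟨a, hab, ?_, ?_, by rw [hset, Set.pair_comm]⟩
    · have : a ∈ {u | u ∈ P ∧ e ∈ edgesOf u} := hset ▸ Or.inl rfl
      exact this.1
    · have : a ∈ {u | u ∈ P ∧ e ∈ edgesOf u} := hset ▸ Or.inl rfl
      exact this.2

/-- Summing an indicator-gated function over a subtype when the support is a pair. -/
lemma sum_pair_of_filter {α : Type} (T : Set α) [Fintype ↥T] (p : α → Prop)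
    [DecidablePred fun x : ↥T => p x.1]
    (f : ↥T → ZMod 2) {a b : α} (ha : a ∈ T) (hb : b ∈ T) (hab : a ≠ b)
    (hset : {x | x ∈ T ∧ p x} = {a, b}) :
    ∑ x : ↥T, (if p x.1 then f x else 0) = f ⟨a, ha⟩ + f ⟨b, hb⟩ := by
  letI := Classical.decEq (↥T)
  rw [← Finset.sum_filter]
  have hfil : Finset.univ.filter (fun x : ↥T => p x.1) = {⟨a, ha⟩, ⟨b, hb⟩} := by
    ext u
    simp only [Finset.mem_filter, Finset.mem_univ, true_and, Finset.mem_insert,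
      Finset.mem_singleton]
    constructor
    · intro hp
      have : u.1 ∈ ({a, b} : Set α) := hset ▸ ⟨u.2, hp⟩
      rcases this with h | h
      · exact Or.inl (Subtype.ext h)
      · exact Or.inr (Subtype.ext h)
    · rintro (rfl | rfl)
      · have : a ∈ {x | x ∈ T ∧ p x} := hset ▸ Or.inl rfl
        exact this.2
      · have : b ∈ {x | x ∈ T ∧ p x} := hset ▸ Or.inr rfl
        exact this.2
  rw [hfil, Finset.sum_pair (fun h => hab (congrArg Subtype.val h))]

/-- The central homological lemma: on a genus-0 grid surface, every even-degree set of
grid edges is the boundary of a set of faces. -/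
lemma cycle_is_boundary (P : Set Sq) (hsurf : IsGridSurface P)
    (edgeTwo : ∀ e : GridEdge, (∃ s ∈ P, e ∈ edgesOf s) →
      {s | s ∈ P ∧ e ∈ edgesOf s}.ncard = 2)
    (euler : (vertsOfSet P).ncard + P.ncard = (edgesOfSet P).ncard + 2)
    (ρ : Set GridEdge) (hρE : ρ ⊆ edgesOfSet P)
    (hdeg : ∀ v : Cell, Even {e | e ∈ ρ ∧ v ∈ ends e}.ncard) :
    ∃ S, S ⊆ P ∧ ∀ e s t, s ∈ P → t ∈ P → s ≠ t → e ∈ edgesOf s → e ∈ edgesOf t →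
      (e ∈ ρ ↔ Xor' (s ∈ S) (t ∈ S)) := by
  classical
  obtain ⟨hPfin, hPne, hconn⟩ := hsurf
  have hEfin := edgesOfSet_finite hPfin
  have hVfin := vertsOfSet_finite hPfin
  haveI : Fintype ↥P := hPfin.fintype
  haveI : Fintype ↥(edgesOfSet P) := hEfin.fintype
  haveI : Fintype ↥(vertsOfSet P) := hVfin.fintype
  -- boundary maps
  set M : Matrix ↥(edgesOfSet P) ↥P (ZMod 2) :=
    fun e s => if e.1 ∈ edgesOf s.1 then 1 else 0 with hM
  set Nm : Matrix ↥(vertsOfSet P) ↥(edgesOfSet P) (ZMod 2) :=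
    fun v e => if v.1 ∈ ends e.1 then 1 else 0 with hNm
  set d2 := M.mulVecLin with hd2
  set d1 := Nm.mulVecLin with hd1
  -- ∂₁ ∘ ∂₂ = 0
  have hNM : Nm * M = 0 := by
    ext v s
    rw [Matrix.mul_apply]
    have : ∀ e : ↥(edgesOfSet P), Nm v e * M e s =
        (if e.1 ∈ {e' | e' ∈ edgesOf s.1 ∧ v.1 ∈ ends e'} then (1 : ZMod 2) else 0) := by
      intro e
      simp only [hNm, hM, Set.mem_setOf_eq]
      by_cases h1 : v.1 ∈ ends e.1 <;> by_cases h2 : e.1 ∈ edgesOf s.1 <;>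
        simp [h1, h2]
    rw [Finset.sum_congr rfl (fun e _ => this e)]
    have hWT : {e' | e' ∈ edgesOf s.1 ∧ v.1 ∈ ends e'} ⊆ edgesOfSet P :=
      fun e' he' => mem_edgesOfSet.mpr ⟨s.1, s.2, he'.1⟩
    rw [sum_ind (edgesOfSet P) _ hWT]
    by_cases hv : v.1 ∈ vertsOf s.1
    · obtain ⟨δ₁, δ₂, hc⟩ := mem_vertsOf.mp hv
      rw [hc, edges_through_corner,
        Set.ncard_pair (eSide_ne_dir (oth_spec s.1.2).2.2.1)]
      simp only [Matrix.zero_apply, Nat.cast_ofNat]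
      decide
    · rw [edges_through_nonvert hv]
      simp [Matrix.zero_apply]
  have hrange_le : LinearMap.range d2 ≤ LinearMap.ker d1 := by
    rintro _ ⟨x, rfl⟩
    rw [LinearMap.mem_ker, hd1, hd2, Matrix.mulVecLin_apply, Matrix.mulVecLin_apply,
      Matrix.mulVec_mulVec, hNM]
    simp
  -- d2 applied at an edge with known face pair
  have hd2_pair : ∀ (x : ↥P → ZMod 2) {e : GridEdge} (he : e ∈ edgesOfSet P)
      {s t : Sq} (hs : s ∈ P) (ht : t ∈ P) (hst : s ≠ t)
      (hset : {u | u ∈ P ∧ e ∈ edgesOf u} = {s, t}),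
      d2 x ⟨e, he⟩ = x ⟨s, hs⟩ + x ⟨t, ht⟩ := by
    intro x e he s t hs ht hst hset
    show ∑ u : ↥P, M ⟨e, he⟩ u * x u = _
    have : ∀ u : ↥P, M ⟨e, he⟩ u * x u = if e ∈ edgesOf u.1 then x u else 0 := by
      intro u
      simp only [hM]
      by_cases h : e ∈ edgesOf u.1 <;> simp [h]
    rw [Finset.sum_congr rfl (fun u _ => this u),
      sum_pair_of_filter P (fun u => e ∈ edgesOf u) x hs ht hst hset]
  -- kernel of d2 is at most the constants
  have hker2 : ∀ x ∈ LinearMap.ker d2, x = 0 ∨ x = fun _ => 1 := by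
    intro x hx
    have hadj : ∀ s t : ↥P, (dualGraph P).Adj s t → x s = x t := by
      intro s t hst
      obtain ⟨hne, e, hes, het⟩ := hst
      have heP : e ∈ edgesOfSet P := mem_edgesOfSet.mpr ⟨s.1, s.2, hes⟩
      obtain ⟨u, hu_ne, huP, hue, hset⟩ := faces_pair edgeTwo s.2 hes
      have htu : t.1 = u := by
        have : t.1 ∈ ({s.1, u} : Set Sq) := hset ▸ ⟨t.2, het⟩
        rcases this with h | h
        · exact absurd h hne.symm
        · exact h
      rw [← htu] at hset
      have hpair := hd2_pair x heP s.2 t.2 hne hset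
      rw [LinearMap.mem_ker.mp hx] at hpair
      have h0 : x ⟨s.1, s.2⟩ + x ⟨t.1, t.2⟩ = 0 := hpair.symm.trans (by simp)
      exact zmod2_add_eq_zero _ _ h0
    have hwalk : ∀ {u w : ↥P}, (dualGraph P).Walk u w → x u = x w := by
      intro u w p
      induction p with
      | nil => rfl
      | cons h q ih => exact (hadj _ _ h).trans ih
    by_cases hx0 : x = 0
    · exact Or.inl hx0
    · refine Or.inr ?_
      obtain ⟨s₀, hs₀⟩ : ∃ s₀, x s₀ ≠ 0 := by
        by_contra h
        push_neg at h
        exact hx0 (funext fun s => h s)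
      have hs₀1 : x s₀ = 1 := (zmod2_cases (x s₀)).resolve_left hs₀
      funext t
      obtain ⟨p⟩ := hconn.preconnected s₀ t
      exact (hwalk p).symm.trans hs₀1
  -- skeleton reachability relation on grid vertices
  set J : Cell → Cell → Prop := fun u w => ∃ e ∈ edgesOfSet P,
    (u = e.1 ∧ w = e.1 + unitVec e.2) ∨ (w = e.1 ∧ u = e.1 + unitVec e.2) with hJ
  have hcorner_mem : ∀ s ∈ P, ∀ δ₁ δ₂ : Bool, corner s δ₁ δ₂ ∈ vertsOfSet P :=
    fun s hs δ₁ δ₂ => mem_vertsOfSet.mpr ⟨s, hs, mem_vertsOf.mpr ⟨δ₁, δ₂, rfl⟩⟩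
  have hJ1 : ∀ s ∈ P, ∀ δ₂ : Bool, J (corner s false δ₂) (corner s true δ₂) := by
    intro s hs δ₂
    obtain ⟨h1, h2⟩ := ends_eSide_oth1 s δ₂
    exact ⟨eSide s (oth1 s.2) δ₂,
      mem_edgesOfSet.mpr ⟨s, hs, eSide_mem (oth_spec s.2).1 δ₂⟩, Or.inl ⟨h1.symm, h2.symm⟩⟩
  have hJ2 : ∀ s ∈ P, ∀ δ₁ : Bool, J (corner s δ₁ false) (corner s δ₁ true) := by
    intro s hs δ₁
    obtain ⟨h1, h2⟩ := ends_eSide_oth2 s δ₁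
    exact ⟨eSide s (oth2 s.2) δ₁,
      mem_edgesOfSet.mpr ⟨s, hs, eSide_mem (oth_spec s.2).2.1 δ₁⟩, Or.inl ⟨h1.symm, h2.symm⟩⟩
  have hJsymm : ∀ u w : Cell, J u w → J w u := by
    rintro u w ⟨e, he, h | h⟩
    exacts [⟨e, he, Or.inr h⟩, ⟨e, he, Or.inl h⟩]
  have hstep1 : ∀ s ∈ P, ∀ δ₁ ε₁ δ₂ : Bool,
      Relation.ReflTransGen J (corner s δ₁ δ₂) (corner s ε₁ δ₂) := by
    intro s hs δ₁ ε₁ δ₂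
    cases δ₁ <;> cases ε₁
    · exact Relation.ReflTransGen.refl
    · exact Relation.ReflTransGen.single (hJ1 s hs δ₂)
    · exact Relation.ReflTransGen.single (hJsymm _ _ (hJ1 s hs δ₂))
    · exact Relation.ReflTransGen.refl
  have hstep2 : ∀ s ∈ P, ∀ δ₁ δ₂ ε₂ : Bool,
      Relation.ReflTransGen J (corner s δ₁ δ₂) (corner s δ₁ ε₂) := by
    intro s hs δ₁ δ₂ ε₂
    cases δ₂ <;> cases ε₂
    · exact Relation.ReflTransGen.refl
    · exact Relation.ReflTransGen.single (hJ2 s hs δ₁)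
    · exact Relation.ReflTransGen.single (hJsymm _ _ (hJ2 s hs δ₁))
    · exact Relation.ReflTransGen.refl
  have hsame : ∀ s ∈ P, ∀ u w : Cell, u ∈ vertsOf s → w ∈ vertsOf s →
      Relation.ReflTransGen J u w := by
    intro s hs u w hu hw
    obtain ⟨δ₁, δ₂, rfl⟩ := mem_vertsOf.mp hu
    obtain ⟨ε₁, ε₂, rfl⟩ := mem_vertsOf.mp hw
    exact (hstep1 s hs δ₁ ε₁ δ₂).trans (hstep2 s hs ε₁ δ₂ ε₂)
  have hfaceverts : ∀ {a b : ↥P} (_ : (dualGraph P).Walk a b), ∀ {u w : Cell},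
      u ∈ vertsOf a.1 → w ∈ vertsOf b.1 → Relation.ReflTransGen J u w := by
    intro a b p
    induction p with
    | nil => intro u w hu hw; exact hsame _ (Subtype.mem _) _ _ hu hw
    | @cons a' b' c' h q ih =>
      intro u w hu hw
      obtain ⟨hne, e, hes, het⟩ := h
      exact (hsame _ a'.2 _ _ hu (ends_mem_verts hes).1).trans
        (ih (ends_mem_verts het).1 hw)
  have hreach : ∀ u ∈ vertsOfSet P, ∀ w ∈ vertsOfSet P, Relation.ReflTransGen J u w := by
    intro u hu w hw
    obtain ⟨s, hs, hus⟩ := mem_vertsOfSet.mp hu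
    obtain ⟨t, ht, hwt⟩ := mem_vertsOfSet.mp hw
    obtain ⟨p⟩ := hconn.preconnected ⟨s, hs⟩ ⟨t, ht⟩
    exact hfaceverts p hus hwt
  -- elementary 1-chains are in the range of d1
  set Ind : Cell → (↥(vertsOfSet P) → ZMod 2) := fun c w => if w.1 = c then 1 else 0 with hInd
  have hzz : ∀ a : ZMod 2, a + a = 0 := by decide
  have hstep_mem : ∀ u w : Cell, J u w → Ind u + Ind w ∈ LinearMap.range d1 := by
    intro u w hj
    obtain ⟨e, heP, hc⟩ := hj
    have huw : u ≠ w := by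
      rcases hc with ⟨rfl, rfl⟩ | ⟨rfl, rfl⟩
      · exact ends_ne e
      · exact (ends_ne e).symm
    refine ⟨(fun e' => if e'.1 = e then 1 else 0), ?_⟩
    funext v
    show (∑ e' : ↥(edgesOfSet P), Nm v e' * (if e'.1 = e then 1 else 0)) = _
    rw [Finset.sum_eq_single (⟨e, heP⟩ : ↥(edgesOfSet P))]
    · have hends : v.1 ∈ ends e ↔ (v.1 = u ∨ v.1 = w) := by
        rcases hc with ⟨rfl, rfl⟩ | ⟨rfl, rfl⟩
        · exact Iff.rfl
        · exact or_comm
      simp only [hNm, Pi.add_apply, hInd, if_pos rfl, mul_one]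
      by_cases h1 : v.1 = u <;> by_cases h2 : v.1 = w
      · exact absurd (h1.symm.trans h2) huw
      · subst h1; simp [hends, h2]
      · subst h2; simp [hends, h1]
      · simp [hends, h1, h2]
    · intro b _ hb
      rw [if_neg (fun hh => hb (Subtype.ext hh)), mul_zero]
    · intro h
      exact absurd (Finset.mem_univ _) h
  have hrtg_mem : ∀ u w : Cell, Relation.ReflTransGen J u w →
      Ind u + Ind w ∈ LinearMap.range d1 := by
    intro u w h
    induction h with
    | refl =>
      have : Ind u + Ind u = 0 := funext fun v => hzz _
      rw [this]; exact zero_mem _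
    | @tail b c hub hbc ih =>
      have : Ind u + Ind c = (Ind u + Ind b) + (Ind b + Ind c) := by
        funext v
        have : ∀ a b c : ZMod 2, a + c = a + b + (b + c) := by decide
        exact this _ _ _
      rw [this]
      exact add_mem ih (hstep_mem _ _ hbc)
  -- the sum functional
  obtain ⟨s₀, hs₀⟩ := hPne
  have hv₀mem := hcorner_mem s₀ hs₀ false false
  set v₀ : ↥(vertsOfSet P) := ⟨corner s₀ false false, hv₀mem⟩ with hv₀
  set φ : (↥(vertsOfSet P) → ZMod 2) →ₗ[ZMod 2] ZMod 2 :=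
    ∑ v, LinearMap.proj v with hφ
  have hφ_apply : ∀ x : ↥(vertsOfSet P) → ZMod 2, φ x = ∑ v, x v := by
    intro x
    rw [hφ]
    simp [LinearMap.coe_sum, Finset.sum_apply, LinearMap.proj_apply]
  have hφsurj : Function.Surjective φ := by
    intro c
    refine ⟨fun w => if w = v₀ then c else 0, ?_⟩
    rw [hφ_apply, Finset.sum_ite_eq' Finset.univ v₀ (fun _ => c), if_pos (Finset.mem_univ _)]
  -- kernel of the sum functional is inside the range of d1
  have hkerφ_le : LinearMap.ker φ ≤ LinearMap.range d1 := by
    intro x hx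
    have hx0 : ∑ v, x v = 0 := by rw [← hφ_apply]; exact LinearMap.mem_ker.mp hx
    set supp := Finset.univ.filter (fun v : ↥(vertsOfSet P) => x v = 1) with hsupp
    have hsum1 : (∑ v ∈ supp, Ind v.1) = x := by
      funext w
      rw [Finset.sum_apply]
      have hterm : ∀ v ∈ supp, Ind v.1 w = if v = w then 1 else 0 := by
        intro v _
        simp only [hInd]
        by_cases h : v = w
        · rw [if_pos (by rw [h]), if_pos h]
        · rw [if_neg (fun hh => h (Subtype.ext hh).symm), if_neg h]
      rw [Finset.sum_congr rfl hterm, Finset.sum_ite_eq' supp w (fun _ => 1)]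
      split_ifs with h
      · exact ((Finset.mem_filter.mp h).2).symm
      · rcases zmod2_cases (x w) with h0 | h1
        · exact h0.symm
        · exact absurd (Finset.mem_filter.mpr ⟨Finset.mem_univ w, h1⟩) h
    have hcard0 : ((supp.card : ℕ) : ZMod 2) = 0 := by
      have : ∑ v, x v = ((supp.card : ℕ) : ZMod 2) := by
        rw [← Finset.sum_boole]
        apply Finset.sum_congr rfl
        intro v _
        rcases zmod2_cases (x v) with h | h <;> rw [h] <;> simp [h]
      rw [← this, hx0]
    have hxdec : x = ∑ v ∈ supp, (Ind v.1 + Ind v₀.1) := by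
      rw [Finset.sum_add_distrib, hsum1, Finset.sum_const,
        ← Nat.cast_smul_eq_nsmul (ZMod 2), hcard0, zero_smul, add_zero]
    rw [hxdec]
    exact Submodule.sum_mem _ (fun v _ =>
      hrtg_mem _ _ (hreach _ v.2 _ v₀.2))
  -- rank bookkeeping
  haveI : Nonempty ↥P := ⟨⟨s₀, hs₀⟩⟩
  have hone_ne : (fun _ => (1 : ZMod 2)) ≠ (0 : ↥P → ZMod 2) := by
    intro h
    have := congrFun h ⟨s₀, hs₀⟩
    simp at this
  have hker2_le : LinearMap.ker d2 ≤ Submodule.span (ZMod 2) {(fun _ => 1 : ↥P → ZMod 2)} := by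
    intro x hx
    rcases hker2 x hx with rfl | rfl
    · exact zero_mem _
    · exact Submodule.mem_span_singleton_self _
  have hkd2 : Module.finrank (ZMod 2) (LinearMap.ker d2) ≤ 1 := by
    have := Submodule.finrank_mono hker2_le
    rwa [finrank_span_singleton hone_ne] at this
  have hrk2 := LinearMap.finrank_range_add_finrank_ker d2
  have hrk1 := LinearMap.finrank_range_add_finrank_ker d1
  have hrkφ := LinearMap.finrank_range_add_finrank_ker φ
  rw [Module.finrank_pi] at hrk2 hrk1 hrkφ
  have hrφtop : LinearMap.range φ = ⊤ := LinearMap.range_eq_top.mpr hφsurj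
  have hrφ1 : Module.finrank (ZMod 2) (LinearMap.range φ) = 1 := by
    rw [hrφtop, finrank_top, Module.finrank_self]
  have hkerφ_rk := Submodule.finrank_mono hkerφ_le
  -- translate ncard to Fintype.card
  have hcP : P.ncard = Fintype.card ↥P := by
    rw [← Nat.card_coe_set_eq, Nat.card_eq_fintype_card]
  have hcE : (edgesOfSet P).ncard = Fintype.card ↥(edgesOfSet P) := by
    rw [← Nat.card_coe_set_eq, Nat.card_eq_fintype_card]
  have hcV : (vertsOfSet P).ncard = Fintype.card ↥(vertsOfSet P) := by
    rw [← Nat.card_coe_set_eq, Nat.card_eq_fintype_card]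
  rw [hcP, hcE, hcV] at euler
  have heq : LinearMap.range d2 = LinearMap.ker d1 := by
    apply Submodule.eq_of_le_of_finrank_le hrange_le
    rw [hrφ1] at hrkφ
    omega
  -- the rim cycle is a boundary
  set z : ↥(edgesOfSet P) → ZMod 2 := fun e => if e.1 ∈ ρ then 1 else 0 with hz
  have hz_ker : z ∈ LinearMap.ker d1 := by
    rw [LinearMap.mem_ker]
    funext v
    show (∑ e : ↥(edgesOfSet P), Nm v e * z e) = 0
    have hterm : ∀ e : ↥(edgesOfSet P), Nm v e * z e =
        if e.1 ∈ {e' | e' ∈ ρ ∧ v.1 ∈ ends e'} then 1 else 0 := by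
      intro e
      simp only [hNm, hz, Set.mem_setOf_eq]
      by_cases h1 : v.1 ∈ ends e.1 <;> by_cases h2 : e.1 ∈ ρ <;>
        simp [h1, h2]
    rw [Finset.sum_congr rfl (fun e _ => hterm e),
      sum_ind (edgesOfSet P) _ (fun e' he' => hρE he'.1)]
    obtain ⟨k, hk⟩ := hdeg v.1
    rw [hk]
    rw [ZMod.natCast_eq_zero_iff]
    exact ⟨k, by ring⟩
  rw [← heq] at hz_ker
  obtain ⟨x, hx⟩ := hz_ker
  refine ⟨{s | ∃ h : s ∈ P, x ⟨s, h⟩ = 1}, fun s hs => hs.choose, ?_⟩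
  intro e s t hs ht hst hes het
  have heE : e ∈ edgesOfSet P := mem_edgesOfSet.mpr ⟨s, hs, hes⟩
  have hset : {u | u ∈ P ∧ e ∈ edgesOf u} = {s, t} := by
    obtain ⟨u, hune, huP, hue, hset'⟩ := faces_pair edgeTwo hs hes
    have : t ∈ ({s, u} : Set Sq) := hset' ▸ ⟨ht, het⟩
    rcases this with h | h
    · exact absurd h (fun hh => hst hh.symm)
    · rw [hset', h]
  have hpair := hd2_pair x heE hs ht hst hset
  rw [hx] at hpair
  have hSs : s ∈ {s | ∃ h : s ∈ P, x ⟨s, h⟩ = 1} ↔ x ⟨s, hs⟩ = 1 :=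
    ⟨fun ⟨_, hh⟩ => hh, fun hh => ⟨hs, hh⟩⟩
  have hSt : t ∈ {s | ∃ h : s ∈ P, x ⟨s, h⟩ = 1} ↔ x ⟨t, ht⟩ = 1 :=
    ⟨fun ⟨_, hh⟩ => hh, fun hh => ⟨ht, hh⟩⟩
  have hXor : Xor' (s ∈ {s | ∃ h : s ∈ P, x ⟨s, h⟩ = 1})
      (t ∈ {s | ∃ h : s ∈ P, x ⟨s, h⟩ = 1}) ↔ x ⟨s, hs⟩ + x ⟨t, ht⟩ = 1 := by
    rw [Xor', hSs, hSt]
    rcases zmod2_cases (x ⟨s, hs⟩) with h1 | h1 <;>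
      rcases zmod2_cases (x ⟨t, ht⟩) with h2 | h2 <;>
      rw [h1, h2] <;> simp <;> decide
  rw [hXor, ← hpair]
  show e ∈ ρ ↔ (if e ∈ ρ then (1 : ZMod 2) else 0) = 1
  split_ifs with h
  · simp [h]
  · exact iff_of_false h (by decide)
/-! ### Layer 5: rim edges of a band -/

lemma thirdIdx_invol : ∀ i d : Fin 3, d ≠ i → thirdIdx i (thirdIdx i d) = d := by decide

lemma thirdIdx_of_ne : ∀ t2 a b : Fin 3, a ≠ b → t2 ≠ a → t2 ≠ b → thirdIdx t2 b = a := by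
  decide

lemma thirdIdx_recover : ∀ t2 t2' b : Fin 3, t2 ≠ b → t2' ≠ b →
    thirdIdx t2 b = thirdIdx t2' b → t2 = t2' := by decide

/-- The edge of a slab square `t` (slab axis `b`) lying in the lower bounding plane. -/
def rimEdge (b : Fin 3) (t : Sq) : GridEdge := (t.1 + unitVec t.2, thirdIdx t.2 b)

lemma rimEdge_mem {b : Fin 3} {t : Sq} (hb : b ≠ t.2) : rimEdge b t ∈ edgesOf t := by
  obtain ⟨h1, h2⟩ := thirdIdx_spec t.2 b hb
  rw [mem_edgesOf]
  refine ⟨h1, ?_, ?_, Or.inl ?_⟩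
  · show (t.1 + unitVec t.2) t.2 = t.1 t.2 + 1
    simp [unitVec_self]
  · show (t.1 + unitVec t.2) (thirdIdx t.2 b) = t.1 (thirdIdx t.2 b)
    simp [unitVec_ne h1]
  · rw [show (rimEdge b t).2 = thirdIdx t.2 b from rfl, thirdIdx_invol t.2 b hb]
    show (t.1 + unitVec t.2) b = t.1 b
    simp [unitVec_ne hb]

lemma rimEdge_injOn {b : Fin 3} {t t' : Sq} (hb : b ≠ t.2) (hb' : b ≠ t'.2)
    (h : rimEdge b t = rimEdge b t') : t = t' := by
  have h2 : thirdIdx t.2 b = thirdIdx t'.2 b := congrArg Prod.snd h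
  have ht2 : t.2 = t'.2 := thirdIdx_recover _ _ _ (Ne.symm hb) (Ne.symm hb') h2
  have h1 : t.1 + unitVec t.2 = t'.1 + unitVec t'.2 := congrArg Prod.fst h
  rw [ht2] at h1
  exact Prod.ext (add_right_cancel h1) ht2

/-- The endpoints of the rim edge of `t` correspond to the direction-`b` edges of `t`. -/
lemma ends_rimEdge {b : Fin 3} {t : Sq} (hb : b ≠ t.2) (v : Cell) :
    v ∈ ends (rimEdge b t) ↔ (v, b) ∈ edgesOf t := by
  obtain ⟨h1, h2⟩ := thirdIdx_spec t.2 b hb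
  have hbase : (rimEdge b t).1 = t.1 + unitVec t.2 := rfl
  have hdir : (rimEdge b t).2 = thirdIdx t.2 b := rfl
  have u1 : unitVec t.2 t.2 = 1 := unitVec_self t.2
  have u2 : unitVec t.2 b = 0 := unitVec_ne hb
  have u3 : unitVec t.2 (thirdIdx t.2 b) = 0 := unitVec_ne h1
  have u4 : unitVec (thirdIdx t.2 b) t.2 = 0 := unitVec_ne (Ne.symm h1)
  have u5 : unitVec (thirdIdx t.2 b) b = 0 := unitVec_ne (Ne.symm h2)
  have u6 : unitVec (thirdIdx t.2 b) (thirdIdx t.2 b) = 1 := unitVec_self _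
  constructor
  · intro hv
    rw [mem_edgesOf]
    refine ⟨hb, ?_, ?_, ?_⟩
    · show v t.2 = t.1 t.2 + 1
      rcases hv with h | h <;> rw [h] <;> rw [hbase] <;>
        simp [hdir, Pi.add_apply, u1, u4]
    · show v b = t.1 b
      rcases hv with h | h <;> rw [h] <;> rw [hbase] <;>
        simp [hdir, Pi.add_apply, u2, u5]
    · show v (thirdIdx t.2 b) = t.1 (thirdIdx t.2 b) ∨
        v (thirdIdx t.2 b) = t.1 (thirdIdx t.2 b) + 1
      rcases hv with h | h
      · left; rw [h, hbase]; simp [Pi.add_apply, u3]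
      · right; rw [h, hbase]; simp [hdir, Pi.add_apply, u3, u6]
  · intro hv
    rw [mem_edgesOf] at hv
    obtain ⟨_, hv1, hv2, hv3⟩ := hv
    have hv1 : v t.2 = t.1 t.2 + 1 := hv1
    have hv2 : v b = t.1 b := hv2
    have hv3 : v (thirdIdx t.2 b) = t.1 (thirdIdx t.2 b) ∨
        v (thirdIdx t.2 b) = t.1 (thirdIdx t.2 b) + 1 := hv3
    rcases hv3 with h3 | h3
    · left
      funext m
      rcases fin3_trichotomy t.2 b m hb with hm | hm | hm <;> rw [hm, hbase] <;>
        simp [Pi.add_apply, u1, u2, u3, hv1, hv2, h3]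
    · right
      funext m
      rcases fin3_trichotomy t.2 b m hb with hm | hm | hm <;> rw [hm, hbase] <;>
        simp [hdir, Pi.add_apply, u1, u2, u3, u4, u5, u6, hv1, hv2, h3]

lemma eSide_false (s : Sq) (d : Fin 3) : eSide s d false = (s.1 + unitVec s.2, d) := by
  show (s.1 + unitVec s.2 + 0, d) = _
  rw [add_zero]

lemma eSide_false_true_ne {s : Sq} {d : Fin 3} (hd : d ≠ s.2) :
    eSide s d false ≠ eSide s d true := by
  obtain ⟨h1, h2⟩ := thirdIdx_spec s.2 d hd
  intro h
  have hc := congrFun (congrArg Prod.fst h) (thirdIdx s.2 d)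
  have hfalse : (eSide s d false).1 (thirdIdx s.2 d) = s.1 (thirdIdx s.2 d) := by
    show (s.1 + unitVec s.2 + 0) _ = _
    simp [unitVec_ne h1]
  have htrue : (eSide s d true).1 (thirdIdx s.2 d) = s.1 (thirdIdx s.2 d) + 1 := by
    show (s.1 + unitVec s.2 + unitVec (thirdIdx s.2 d)) _ = _
    simp [unitVec_ne h1, unitVec_self]
  rw [hfalse, htrue] at hc
  omega
/-- Any two overlapping bands of a grid polyhedron overlap in at least
two grid squares. -/
theorem overlapping_bands_share_two_squares (C : Set Cell) (P : Set Sq)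
    (hP : IsGridPolyhedron C P) (B₁ B₂ : Set Sq) (hB₁ : IsBand P B₁)
    (hB₂ : IsBand P B₂) (hov : Overlaps B₁ B₂) : 2 ≤ (B₁ ∩ B₂).ncard := by
  classical
  obtain ⟨a, x, hcomp₁⟩ := hB₁
  obtain ⟨b, y, hcomp₂⟩ := hB₂
  obtain ⟨s₀, hs₀⟩ := hov.2
  have hs₀1 : s₀ ∈ B₁ := hs₀.1
  have hs₀2 : s₀ ∈ B₂ := hs₀.2
  have hsub₁ : B₁ ⊆ slabSquares P a x := hcomp₁.2.1
  have hsub₂ : B₂ ⊆ slabSquares P b y := hcomp₂.2.1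
  have hslab : ∀ {Q : Set Sq} {c : Fin 3} {w : ℤ} {t : Sq}, t ∈ slabSquares Q c w →
      t ∈ Q ∧ t.2 ≠ c ∧ t.1 c = w := fun h => h
  have hab : a ≠ b := by
    intro h
    subst h
    have h1 := hslab (hsub₁ hs₀1)
    have h2 := hslab (hsub₂ hs₀2)
    have hxy : x = y := by rw [← h1.2.2, h2.2.2]
    subst hxy
    exact hov.1 (comp_unique hcomp₁ hcomp₂ hs₀1 hs₀2)
  have hPfin := hP.surface.finite
  have hB₁P : B₁ ⊆ P := fun t ht => (hslab (hsub₁ ht)).1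
  have hB₂P : B₂ ⊆ P := fun t ht => (hslab (hsub₂ ht)).1
  -- the rim cycle of B₂
  set ρ : Set GridEdge := rimEdge b '' B₂ with hρ
  have hbne : ∀ t ∈ B₂, b ≠ t.2 := fun t ht => Ne.symm (hslab (hsub₂ ht)).2.1
  have hρE : ρ ⊆ edgesOfSet P := by
    rintro e ⟨t, ht, rfl⟩
    exact mem_edgesOfSet.mpr ⟨t, hB₂P ht, rimEdge_mem (hbne t ht)⟩
  have hdeg : ∀ v : Cell, Even {e | e ∈ ρ ∧ v ∈ ends e}.ncard := by
    intro v
    have himg : {e | e ∈ ρ ∧ v ∈ ends e} =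
        rimEdge b '' {t | t ∈ B₂ ∧ (v, b) ∈ edgesOf t} := by
      ext e
      constructor
      · rintro ⟨⟨t, ht, rfl⟩, hv⟩
        exact ⟨t, ⟨ht, (ends_rimEdge (hbne t ht) v).mp hv⟩, rfl⟩
      · rintro ⟨t, ⟨ht, hv⟩, rfl⟩
        exact ⟨⟨t, ht, rfl⟩, (ends_rimEdge (hbne t ht) v).mpr hv⟩
    rw [himg]
    rcases Set.eq_empty_or_nonempty {t | t ∈ B₂ ∧ (v, b) ∈ edgesOf t} with hemp | ⟨t₀, ht₀⟩
    · rw [hemp, Set.image_empty, Set.ncard_empty]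
      exact Even.zero
    · have hinj : Set.InjOn (rimEdge b) {t | t ∈ B₂ ∧ (v, b) ∈ edgesOf t} :=
        fun t ht t' ht' h => rimEdge_injOn (hbne t ht.1) (hbne t' ht'.1) h
      rw [Set.ncard_image_of_injOn hinj]
      have hTeq : {t | t ∈ B₂ ∧ (v, b) ∈ edgesOf t} = {u | u ∈ P ∧ (v, b) ∈ edgesOf u} := by
        ext u
        constructor
        · rintro ⟨hu, hvu⟩
          exact ⟨hB₂P hu, hvu⟩
        · rintro ⟨huP, hvu⟩
          refine ⟨?_, hvu⟩
          have hu2 : u.2 ≠ b := Ne.symm (edgesOf_normal_ne hvu)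
          have hub : v b = u.1 b := edgesOf_base_dir hvu
          have ht₀b : t₀.1 b = y := (hslab (hsub₂ ht₀.1)).2.2
          have hvb : v b = t₀.1 b := edgesOf_base_dir ht₀.2
          have huy : u.1 b = y := by rw [← hub, hvb, ht₀b]
          by_cases hu0 : u = t₀
          · rw [hu0]; exact ht₀.1
          · exact hcomp₂.2.2.2 t₀ ht₀.1 u ⟨huP, hu2, huy⟩
              ⟨fun hh => hu0 hh.symm, ⟨(v, b), ht₀.2, hvu⟩⟩
      rw [hTeq, hP.edgeTwo (v, b) ⟨t₀, hB₂P ht₀.1, ht₀.2⟩]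
      decide
  obtain ⟨S, hSP, hS⟩ := cycle_is_boundary P hP.surface hP.edgeTwo hP.euler ρ hρE hdeg
  -- the side edges of B₁ in slab direction a
  set A : Set GridEdge := {e | ∃ s ∈ B₁, ∃ δ : Bool, e = eSide s a δ} with hA
  have hane : ∀ s ∈ B₁, a ≠ s.2 := fun s hs => Ne.symm (hslab (hsub₁ hs)).2.1
  have hAE : A ⊆ edgesOfSet P := by
    rintro e ⟨s, hs, δ, rfl⟩
    exact mem_edgesOfSet.mpr ⟨s, hB₁P hs, eSide_mem (hane s hs) δ⟩
  have hAfin : A.Finite := (edgesOfSet_finite hPfin).subset hAE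
  have hB₁fin : B₁.Finite := hPfin.subset hB₁P
  have hfaces : ∀ e ∈ A, ∃ s t : Sq, s ≠ t ∧ s ∈ B₁ ∧ t ∈ B₁ ∧
      e ∈ edgesOf s ∧ e ∈ edgesOf t ∧
      {u | u ∈ P ∧ e ∈ edgesOf u} = {s, t} ∧ {u | u ∈ B₁ ∧ e ∈ edgesOf u} = {s, t} := by
    rintro e ⟨s, hs, δ, rfl⟩
    have hsP := hB₁P hs
    have hes : eSide s a δ ∈ edgesOf s := eSide_mem (hane s hs) δ
    obtain ⟨t, htne, htP, hte, hset⟩ := faces_pair hP.edgeTwo hsP hes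
    have ht2 : t.2 ≠ a := Ne.symm (edgesOf_normal_ne hte)
    have hta : t.1 a = x := by
      have h1 : (eSide s a δ).1 a = t.1 a := edgesOf_base_dir hte
      have h2 : (eSide s a δ).1 a = s.1 a := edgesOf_base_dir hes
      rw [← h1, h2, (hslab (hsub₁ hs)).2.2]
    have htB : t ∈ B₁ := hcomp₁.2.2.2 s hs t ⟨htP, ht2, hta⟩
      ⟨Ne.symm htne, ⟨eSide s a δ, hes, hte⟩⟩
    refine ⟨s, t, fun h => htne h.symm, hs, htB, hes, hte, hset, ?_⟩
    ext u
    constructor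
    · rintro ⟨hu, hue⟩
      have : u ∈ {u | u ∈ P ∧ eSide s a δ ∈ edgesOf u} := ⟨hB₁P hu, hue⟩
      rwa [hset] at this
    · rintro (rfl | rfl)
      · exact ⟨hs, hes⟩
      · exact ⟨htB, hte⟩
  set FA := hAfin.toFinset with hFA
  set FB := hB₁fin.toFinset with hFB
  have hstep : ∀ e ∈ FA, (if e ∈ ρ then (1 : ZMod 2) else 0) =
      ∑ u ∈ FB, (if e ∈ edgesOf u ∧ u ∈ S then (1 : ZMod 2) else 0) := by
    intro e heA
    rw [hFA, Set.Finite.mem_toFinset] at heA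
    obtain ⟨s, t, hst, hsB, htB, hes, het, hsetP, hsetB⟩ := hfaces e heA
    have hsplit : ∀ u, (if e ∈ edgesOf u ∧ u ∈ S then (1 : ZMod 2) else 0) =
        if e ∈ edgesOf u then (if u ∈ S then 1 else 0) else 0 := by
      intro u
      by_cases h1 : e ∈ edgesOf u <;> by_cases h2 : u ∈ S <;> simp [h1, h2]
    rw [Finset.sum_congr rfl (fun u _ => hsplit u), ← Finset.sum_filter]
    have hfil : FB.filter (fun u => e ∈ edgesOf u) = {s, t} := by
      ext u
      simp only [Finset.mem_filter, hFB, Set.Finite.mem_toFinset, Finset.mem_insert,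
        Finset.mem_singleton]
      constructor
      · rintro ⟨hu, hue⟩
        have : u ∈ ({s, t} : Set Sq) := hsetB ▸ (⟨hu, hue⟩ : u ∈ B₁ ∧ e ∈ edgesOf u)
        exact this
      · rintro (rfl | rfl)
        · exact ⟨hsB, hes⟩
        · exact ⟨htB, het⟩
    rw [hfil, Finset.sum_pair hst]
    have hXor := hS e s t (hB₁P hsB) (hB₁P htB) hst hes het
    by_cases h1 : s ∈ S <;> by_cases h2 : t ∈ S
    · have hne : e ∉ ρ := fun h => by
        have := hXor.mp h
        simp [Xor', h1, h2] at this
      rw [if_neg hne, if_pos h1, if_pos h2]; decide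
    · have hmem : e ∈ ρ := hXor.mpr (Or.inl ⟨h1, h2⟩)
      rw [if_pos hmem, if_pos h1, if_neg h2]; decide
    · have hmem : e ∈ ρ := hXor.mpr (Or.inr ⟨h2, h1⟩)
      rw [if_pos hmem, if_neg h1, if_pos h2]; decide
    · have hne : e ∉ ρ := fun h => by
        have := hXor.mp h
        simp [Xor', h1, h2] at this
      rw [if_neg hne, if_neg h1, if_neg h2]; decide
  have hsum0 : ∑ e ∈ FA, (if e ∈ ρ then (1 : ZMod 2) else 0) = 0 := by
    rw [Finset.sum_congr rfl hstep, Finset.sum_comm]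
    apply Finset.sum_eq_zero
    intro u huB
    rw [hFB, Set.Finite.mem_toFinset] at huB
    by_cases hu : u ∈ S
    · have hsimp : ∀ e ∈ FA, (if e ∈ edgesOf u ∧ u ∈ S then (1 : ZMod 2) else 0) =
          if e ∈ edgesOf u then 1 else 0 := by
        intro e _; simp [hu]
      rw [Finset.sum_congr rfl hsimp, Finset.sum_boole]
      have hfil : FA.filter (fun e => e ∈ edgesOf u) =
          {eSide u a false, eSide u a true} := by
        ext e
        simp only [Finset.mem_filter, hFA, Set.Finite.mem_toFinset, Finset.mem_insert,
          Finset.mem_singleton]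
        constructor
        · rintro ⟨heA, heu⟩
          obtain ⟨s', hs', δ, rfl⟩ := heA
          exact edge_eq_eSide heu
        · rintro (rfl | rfl)
          · exact ⟨⟨u, huB, false, rfl⟩, eSide_mem (hane u huB) false⟩
          · exact ⟨⟨u, huB, true, rfl⟩, eSide_mem (hane u huB) true⟩
      rw [hfil, Finset.card_insert_of_notMem
        (by simp only [Finset.mem_singleton]; exact eSide_false_true_ne (hane u huB)),
        Finset.card_singleton]
      decide
    · apply Finset.sum_eq_zero
      intro e _
      simp [hu]
  have hAρfin : (A ∩ ρ).Finite := hAfin.inter_of_left ρ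
  have hcards : ∑ e ∈ FA, (if e ∈ ρ then (1 : ZMod 2) else 0) =
      ((A ∩ ρ).ncard : ZMod 2) := by
    rw [Finset.sum_boole]
    congr 1
    rw [Set.ncard_eq_toFinset_card _ hAρfin]
    congr 1
    ext e
    simp only [Finset.mem_filter, hFA, Set.Finite.mem_toFinset, Set.mem_inter_iff]
  have hAρ : A ∩ ρ = rimEdge b '' (B₁ ∩ B₂) := by
    ext e
    constructor
    · rintro ⟨heA, t, htB₂, rfl⟩
      refine ⟨t, ⟨?_, htB₂⟩, rfl⟩
      obtain ⟨s', t', hne', hs'B, ht'B, hes', het', hsetP, hsetB⟩ := hfaces _ heA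
      have hmem : t ∈ {u | u ∈ P ∧ rimEdge b t ∈ edgesOf u} :=
        ⟨hB₂P htB₂, rimEdge_mem (hbne t htB₂)⟩
      rw [hsetP] at hmem
      rcases hmem with rfl | rfl
      exacts [hs'B, ht'B]
    · rintro ⟨t, ⟨htB₁, htB₂⟩, rfl⟩
      refine ⟨?_, ⟨t, htB₂, rfl⟩⟩
      have ht2a : t.2 ≠ a := (hslab (hsub₁ htB₁)).2.1
      have ht2b : t.2 ≠ b := (hslab (hsub₂ htB₂)).2.1
      have heq : rimEdge b t = eSide t a false := by
        rw [eSide_false]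
        show (t.1 + unitVec t.2, thirdIdx t.2 b) = _
        rw [thirdIdx_of_ne t.2 a b hab ht2a ht2b]
      exact ⟨t, htB₁, false, heq⟩
  have hinj2 : Set.InjOn (rimEdge b) (B₁ ∩ B₂) := fun t ht t' ht' h =>
    rimEdge_injOn (Ne.symm (hslab (hsub₂ ht.2)).2.1) (Ne.symm (hslab (hsub₂ ht'.2)).2.1) h
  have heven : ((B₁ ∩ B₂).ncard : ZMod 2) = 0 := by
    rw [← Set.ncard_image_of_injOn hinj2, ← hAρ, ← hcards]
    exact hsum0
  have hdvd : 2 ∣ (B₁ ∩ B₂).ncard := (ZMod.natCast_eq_zero_iff _ _).mp heven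
  have hpos : 0 < (B₁ ∩ B₂).ncard := by
    rw [Set.ncard_pos (hB₁fin.inter_of_left B₂)]
    exact ⟨s₀, hs₀⟩
  omega

end StripFold
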